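/- arXiv:1808.03542 — 2 statements merged into one kernel-verified Lean document; each statement's English description precedes it below -/
import Mathlib

section
/- For A ∈ B(X), if iso σ_{aw}(A) ∩ (σ_{uBw}(A))^c = ∅ (i.e., Φ^{iso}_{uBw}(A) = ∅), then σ_w(A) = σ_{Bw}(A). -/
open Filter Metric Set Asymptotics Topology

namespace Paper

variable {X : Type*} [NormedAddCommGroup X] [NormedSpace ℂ X] [CompleteSpace X]

/-- The ascent of an operator: the least `n` with `ker Tⁿ = ker Tⁿ⁺¹`, `⊤` if none exists. -/
noncomputable def ascent (T : X →L[ℂ] X) : ℕ∞ :=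
  sInf ((↑) '' {n : ℕ | LinearMap.ker ((T ^ n : X →L[ℂ] X) : X →ₗ[ℂ] X) = LinearMap.ker ((T ^ (n + 1) : X →L[ℂ] X) : X →ₗ[ℂ] X)})

/-- The descent of an operator: the least `n` with `range Tⁿ = range Tⁿ⁺¹`, `⊤` if none exists. -/
noncomputable def descent (T : X →L[ℂ] X) : ℕ∞ :=
  sInf ((↑) '' {n : ℕ | LinearMap.range ((T ^ n : X →L[ℂ] X) : X →ₗ[ℂ] X) = LinearMap.range ((T ^ (n + 1) : X →L[ℂ] X) : X →ₗ[ℂ] X)})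

/-- `T` has the single-valued extension property at `z₀`. -/
def HasSVEPAt (T : X →L[ℂ] X) (z₀ : ℂ) : Prop :=
  ∀ r > (0 : ℝ), ∀ f : ℂ → X, AnalyticOnNhd ℂ f (ball z₀ r) →
    (∀ z ∈ ball z₀ r, T (f z) - z • f z = 0) → ∀ z ∈ ball z₀ r, f z = 0

/-- The approximate point spectrum: points where `T - z` is not bounded below. -/
def aspectrum (T : X →L[ℂ] X) : Set ℂ :=
  {z | ¬ ∃ c > (0 : ℝ), ∀ x : X, c * ‖x‖ ≤ ‖(T - z • 1) x‖}

/-- The isolated points of a set `S ⊆ ℂ`. -/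
def iso (S : Set ℂ) : Set ℂ := {z ∈ S | 𝓝[S \ {z}] z = ⊥}

/-- The set `Π(T)` of poles of the resolvent of `T`. -/
noncomputable def poles (T : X →L[ℂ] X) : Set ℂ :=
  {z ∈ spectrum ℂ T | ascent (T - z • 1) = descent (T - z • 1) ∧ ascent (T - z • 1) ≠ ⊤}

/-- The set `Π^a(T)` of left poles of `T`. -/
noncomputable def leftPoles (T : X →L[ℂ] X) : Set ℂ :=
  {z ∈ aspectrum T | ∃ d : ℕ, ascent (T - z • 1) = (d : ℕ∞) ∧
    IsClosed ((LinearMap.range (((T - z • 1) ^ (d + 1) : X →L[ℂ] X) : X →ₗ[ℂ] X) : Submodule ℂ X) : Set X)}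

/-- `E(T)`: eigenvalues of `T` which are isolated points of the spectrum. -/
def eigE (T : X →L[ℂ] X) : Set ℂ :=
  {z ∈ iso (spectrum ℂ T) | ∃ x : X, x ≠ 0 ∧ T x = z • x}

/-- `E^a(T)`: eigenvalues of `T` which are isolated points of the approximate point spectrum. -/
def eigEa (T : X →L[ℂ] X) : Set ℂ :=
  {z ∈ iso (aspectrum T) | ∃ x : X, x ≠ 0 ∧ T x = z • x}

/-- Fredholm operator. -/
def IsFredholm (T : X →L[ℂ] X) : Prop :=
  FiniteDimensional ℂ (LinearMap.ker (T : X →ₗ[ℂ] X)) ∧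
  IsClosed ((LinearMap.range (T : X →ₗ[ℂ] X) : Submodule ℂ X) : Set X) ∧
  FiniteDimensional ℂ (X ⧸ (LinearMap.range (T : X →ₗ[ℂ] X) : Submodule ℂ X))

/-- The Fredholm index `α(T) - β(T)`. -/
noncomputable def fredIndex (T : X →L[ℂ] X) : ℤ :=
  (Module.finrank ℂ (LinearMap.ker (T : X →ₗ[ℂ] X)) : ℤ) -
    (Module.finrank ℂ (X ⧸ (LinearMap.range (T : X →ₗ[ℂ] X) : Submodule ℂ X)) : ℤ)

/-- The Weyl spectrum `σ_w(T)`. -/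
noncomputable def weylSpec (T : X →L[ℂ] X) : Set ℂ :=
  {z ∈ spectrum ℂ T | ¬ (IsFredholm (T - z • 1) ∧ fredIndex (T - z • 1) = 0)}

/-- Upper semi-Fredholm operator. -/
def IsUpperSemiFredholm (T : X →L[ℂ] X) : Prop :=
  FiniteDimensional ℂ (LinearMap.ker (T : X →ₗ[ℂ] X)) ∧
  IsClosed ((LinearMap.range (T : X →ₗ[ℂ] X) : Submodule ℂ X) : Set X)

/-- `ind T ≤ 0`, allowing an infinite-dimensional cokernel. -/
def indexLE0 (T : X →L[ℂ] X) : Prop :=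
  (Module.finrank ℂ (LinearMap.ker (T : X →ₗ[ℂ] X)) : Cardinal) ≤
    Module.rank ℂ (X ⧸ (LinearMap.range (T : X →ₗ[ℂ] X) : Submodule ℂ X))

/-- The approximate (left) Weyl spectrum `σ_aw(T)`. -/
noncomputable def aweylSpec (T : X →L[ℂ] X) : Set ℂ :=
  {z ∈ aspectrum T | ¬ (IsUpperSemiFredholm (T - z • 1) ∧ indexLE0 (T - z • 1))}

/-- The restriction of `T` to the invariant subspace `range (Tⁿ)`. -/
noncomputable def restr (T : X →L[ℂ] X) (n : ℕ) :
    (LinearMap.range ((T ^ n : X →L[ℂ] X) : X →ₗ[ℂ] X) : Submodule ℂ X) →ₗ[ℂ] (LinearMap.range ((T ^ n : X →L[ℂ] X) : X →ₗ[ℂ] X) : Submodule ℂ X) :=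
  (T : X →ₗ[ℂ] X).restrict (fun x hx => by
    obtain ⟨y, hy⟩ := hx
    refine LinearMap.mem_range.mpr ⟨T y, ?_⟩
    have h : (T ^ n) * T = T * (T ^ n) := ((Commute.refl T).pow_left n).eq
    calc (T ^ n) (T y) = ((T ^ n) * T) y := rfl
      _ = (T * T ^ n) y := by rw [h]
      _ = T ((T ^ n) y) := rfl
      _ = T x := congrArg T hy)

/-- `T` is B-Weyl: for some `n`, `range (Tⁿ)` is closed and the restriction of `T` to it is
Fredholm of index `0`. -/
noncomputable def IsBWeyl (T : X →L[ℂ] X) : Prop :=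
  ∃ n : ℕ, IsClosed ((LinearMap.range ((T ^ n : X →L[ℂ] X) : X →ₗ[ℂ] X) : Submodule ℂ X) : Set X) ∧
    FiniteDimensional ℂ (LinearMap.ker (restr T n)) ∧
    IsClosed ((LinearMap.range (restr T n) :
        Submodule ℂ (LinearMap.range ((T ^ n : X →L[ℂ] X) : X →ₗ[ℂ] X) : Submodule ℂ X)) :
      Set (LinearMap.range ((T ^ n : X →L[ℂ] X) : X →ₗ[ℂ] X) : Submodule ℂ X)) ∧
    FiniteDimensional ℂ
      ((LinearMap.range ((T ^ n : X →L[ℂ] X) : X →ₗ[ℂ] X) : Submodule ℂ X) ⧸ LinearMap.range (restr T n)) ∧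
    Module.finrank ℂ (LinearMap.ker (restr T n)) =
      Module.finrank ℂ ((LinearMap.range ((T ^ n : X →L[ℂ] X) : X →ₗ[ℂ] X) : Submodule ℂ X) ⧸ LinearMap.range (restr T n))

/-- `T` is upper B-Weyl: for some `n`, `range (Tⁿ)` is closed and the restriction of `T` to it is
upper semi-Fredholm of index `≤ 0`. -/
noncomputable def IsUpperBWeyl (T : X →L[ℂ] X) : Prop :=
  ∃ n : ℕ, IsClosed ((LinearMap.range ((T ^ n : X →L[ℂ] X) : X →ₗ[ℂ] X) : Submodule ℂ X) : Set X) ∧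
    FiniteDimensional ℂ (LinearMap.ker (restr T n)) ∧
    IsClosed ((LinearMap.range (restr T n) :
        Submodule ℂ (LinearMap.range ((T ^ n : X →L[ℂ] X) : X →ₗ[ℂ] X) : Submodule ℂ X)) :
      Set (LinearMap.range ((T ^ n : X →L[ℂ] X) : X →ₗ[ℂ] X) : Submodule ℂ X)) ∧
    (Module.finrank ℂ (LinearMap.ker (restr T n)) : Cardinal) ≤
      Module.rank ℂ ((LinearMap.range ((T ^ n : X →L[ℂ] X) : X →ₗ[ℂ] X) : Submodule ℂ X) ⧸ LinearMap.range (restr T n))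

/-- The B-Weyl spectrum `σ_Bw(T)`. -/
noncomputable def bweylSpec (T : X →L[ℂ] X) : Set ℂ :=
  {z ∈ spectrum ℂ T | ¬ IsBWeyl (T - z • 1)}

/-- The upper B-Weyl spectrum `σ_uBw(T)`. -/
noncomputable def ubweylSpec (T : X →L[ℂ] X) : Set ℂ :=
  {z ∈ aspectrum T | ¬ IsUpperBWeyl (T - z • 1)}

/-- `Φ^iso_Bw(T) = iso σ_w(T) ∩ σ_Bw(T)ᶜ`. -/
noncomputable def phiIsoBw (T : X →L[ℂ] X) : Set ℂ := iso (weylSpec T) ∩ (bweylSpec T)ᶜ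

/-- `Φ^iso_uBw(T) = iso σ_aw(T) ∩ σ_uBw(T)ᶜ`. -/
noncomputable def phiIsoUBw (T : X →L[ℂ] X) : Set ℂ := iso (aweylSpec T) ∩ (ubweylSpec T)ᶜ

/-- `T` is polaroid: isolated spectral points are poles. -/
noncomputable def Polaroid (T : X →L[ℂ] X) : Prop := iso (spectrum ℂ T) ⊆ poles T

/-- `T` is left polaroid: isolated points of `σ_a(T)` are left poles. -/
noncomputable def LeftPolaroid (T : X →L[ℂ] X) : Prop := iso (aspectrum T) ⊆ leftPoles T

/-- `T` is a-polaroid: isolated points of `σ_a(T)` are poles. -/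
noncomputable def APolaroid (T : X →L[ℂ] X) : Prop := iso (aspectrum T) ⊆ poles T

/-- Property `(P1)`: `E(T) = Π^a(T)`. -/
noncomputable def P1 (T : X →L[ℂ] X) : Prop := eigE T = leftPoles T

/-- Property `(P2)`: `E^a(T) = Π(T)`. -/
noncomputable def P2 (T : X →L[ℂ] X) : Prop := eigEa T = poles T

/-- The resolvent of `T` has a pole (finite-order singularity) at `z₀`. -/
noncomputable def HasResolventPoleAt (T : X →L[ℂ] X) (z₀ : ℂ) : Prop :=
  z₀ ∈ iso (spectrum ℂ T) ∧ ∃ n : ℕ, 0 < n ∧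
    (fun z => (z - z₀) ^ n • resolvent T z) =O[𝓝[≠] z₀] (fun _ => (1 : ℝ))

/-- A holomorphic (Riesz) functional calculus for `T` on an open neighbourhood `U ⊇ σ(T)`:
an algebra homomorphism on functions holomorphic on `U`, sending `1 ↦ 1`, `id ↦ T`, and
satisfying the spectral mapping theorem for the spectrum and approximate point spectrum. -/
structure HoloCalcOn (T : X →L[ℂ] X) (U : Set ℂ) where
  isOpen : IsOpen U
  spec_subset : spectrum ℂ T ⊆ U
  toFun : (ℂ → ℂ) → (X →L[ℂ] X)
  map_one : toFun (fun _ => 1) = 1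
  map_id : toFun id = T
  map_add : ∀ f g : ℂ → ℂ, AnalyticOnNhd ℂ f U → AnalyticOnNhd ℂ g U →
    toFun (f + g) = toFun f + toFun g
  map_mul : ∀ f g : ℂ → ℂ, AnalyticOnNhd ℂ f U → AnalyticOnNhd ℂ g U →
    toFun (f * g) = toFun f * toFun g
  map_smul : ∀ (c : ℂ) (f : ℂ → ℂ), AnalyticOnNhd ℂ f U → toFun (c • f) = c • toFun f
  spec_map : ∀ f : ℂ → ℂ, AnalyticOnNhd ℂ f U → spectrum ℂ (toFun f) = f '' spectrum ℂ T
  aspec_map : ∀ f : ℂ → ℂ, AnalyticOnNhd ℂ f U → aspectrum (toFun f) = f '' aspectrum T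

/-- `f` is non-constant on each connected component of `σ(T)`. -/
def NonConstOnSpecComponents (T : X →L[ℂ] X) (f : ℂ → ℂ) : Prop :=
  ∀ z ∈ spectrum ℂ T, ∃ w ∈ connectedComponentIn (spectrum ℂ T) z, f w ≠ f z


section Auxiliary

/-! ### Purely algebraic auxiliary lemmas -/

section Alg
variable {M N : Type*} [AddCommGroup M] [Module ℂ M] [AddCommGroup N] [Module ℂ N]

private lemma finExt (p : Submodule ℂ M) (h1 : FiniteDimensional ℂ p)
    (h2 : FiniteDimensional ℂ (M ⧸ p)) : FiniteDimensional ℂ M := by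
  have h1' := Module.rank_lt_aleph0_iff.mpr h1
  have h2' := Module.rank_lt_aleph0_iff.mpr h2
  have h3 : Module.rank ℂ M < Cardinal.aleph0 := by
    rw [← Submodule.rank_quotient_add_rank p]
    exact Cardinal.add_lt_aleph0 h2' h1'
  exact Module.rank_lt_aleph0_iff.mp h3

private lemma finComapSubtype (q s : Submodule ℂ M) [FiniteDimensional ℂ s] :
    FiniteDimensional ℂ (s.comap q.subtype) := by
  have h : s.comap q.subtype = (s ⊓ q).comap q.subtype := by
    ext x; simp [x.2]
  rw [h]
  exact (Submodule.comapSubtypeEquivOfLe (inf_le_right : s ⊓ q ≤ q)).symm.finiteDimensional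

private lemma ker_restrict_eq (f : M →ₗ[ℂ] M) {p : Submodule ℂ M} (hmap : ∀ x ∈ p, f x ∈ p) :
    LinearMap.ker (f.restrict hmap) = (LinearMap.ker f).comap p.subtype := by
  ext x
  simp [LinearMap.mem_ker, LinearMap.restrict_apply, Subtype.ext_iff]

private noncomputable def kerEquivRestrict (f : M →ₗ[ℂ] M) {p : Submodule ℂ M}
    (hmap : ∀ x ∈ p, f x ∈ p) (hcomap : ∀ x, f x ∈ p → x ∈ p) :
    LinearMap.ker (f.restrict hmap) ≃ₗ[ℂ] LinearMap.ker f :=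
  (LinearEquiv.ofEq _ _ (ker_restrict_eq f hmap)).trans
    (Submodule.comapSubtypeEquivOfLe (fun x hx => hcomap x (by
      rw [LinearMap.mem_ker.mp hx]; exact p.zero_mem)))

private noncomputable def cokerEquivRestrict (f : M →ₗ[ℂ] M) {p : Submodule ℂ M}
    (hmap : ∀ x ∈ p, f x ∈ p) (hcomap : ∀ x, f x ∈ p → x ∈ p)
    (hcover : ∀ x : M, ∃ y ∈ p, ∃ z, x = y + f z) :
    (p ⧸ LinearMap.range (f.restrict hmap)) ≃ₗ[ℂ] (M ⧸ LinearMap.range f) := by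
  classical
  let ψ : p →ₗ[ℂ] M ⧸ LinearMap.range f := (LinearMap.range f).mkQ.comp p.subtype
  have hker : LinearMap.ker ψ = LinearMap.range (f.restrict hmap) := by
    ext x
    constructor
    · intro hx
      have hx' : (x : M) ∈ LinearMap.range f := by
        have : ((LinearMap.range f).mkQ) (x : M) = 0 := hx
        rwa [Submodule.mkQ_apply, Submodule.Quotient.mk_eq_zero] at this
      obtain ⟨z, hz⟩ := hx'
      exact ⟨⟨z, hcomap z (by rw [hz]; exact x.2)⟩,
        Subtype.ext (by simpa [LinearMap.restrict_apply] using hz)⟩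
    · rintro ⟨z, rfl⟩
      show ((LinearMap.range f).mkQ) ((f.restrict hmap z : p) : M) = 0
      rw [Submodule.mkQ_apply, Submodule.Quotient.mk_eq_zero]
      exact ⟨z, by simp [LinearMap.restrict_apply]⟩
  have hsurj : Function.Surjective ψ := by
    intro q
    obtain ⟨x, rfl⟩ := Submodule.Quotient.mk_surjective _ q
    obtain ⟨y, hy, z, hz⟩ := hcover x
    refine ⟨⟨y, hy⟩, ?_⟩
    show Submodule.Quotient.mk y = Submodule.Quotient.mk x
    rw [Submodule.Quotient.eq]
    exact ⟨-z, by rw [hz]; simp⟩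
  exact (Submodule.quotEquivOfEq _ _ hker.symm).trans (ψ.quotKerEquivOfSurjective hsurj)

private noncomputable def kerEquivConj (f : M →ₗ[ℂ] M) (g : N →ₗ[ℂ] N) (e : M ≃ₗ[ℂ] N)
    (hc : ∀ x, e (f x) = g (e x)) : LinearMap.ker f ≃ₗ[ℂ] LinearMap.ker g :=
  (e.submoduleMap (LinearMap.ker f)).trans (LinearEquiv.ofEq _ _ (by
    ext y
    simp only [Submodule.mem_map, LinearMap.mem_ker]
    constructor
    · rintro ⟨x, hx, rfl⟩
      show g (e x) = 0
      rw [← hc, hx, map_zero]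
    · intro hy
      refine ⟨e.symm y, ?_, by simp⟩
      have h0 : e (f (e.symm y)) = 0 := by rw [hc, e.apply_symm_apply]; exact hy
      exact (LinearEquiv.map_eq_zero_iff e).mp h0))

private noncomputable def cokerEquivConj (f : M →ₗ[ℂ] M) (g : N →ₗ[ℂ] N) (e : M ≃ₗ[ℂ] N)
    (hc : ∀ x, e (f x) = g (e x)) :
    (M ⧸ LinearMap.range f) ≃ₗ[ℂ] (N ⧸ LinearMap.range g) :=
  Submodule.Quotient.equiv _ _ e (by
    ext y
    simp only [Submodule.mem_map, LinearMap.mem_range]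
    constructor
    · rintro ⟨x', ⟨x, rfl⟩, rfl⟩
      exact ⟨e x, ((hc x).symm : g (e x) = _)⟩
    · rintro ⟨x, rfl⟩
      exact ⟨f (e.symm x), ⟨_, rfl⟩,
        (by rw [hc, e.apply_symm_apply] : e (f (e.symm x)) = g x)⟩)

/-- Perturbation of the identity by a finite-rank map: kernel and cokernel are
finite-dimensional of the same dimension.  Purely algebraic. -/
private lemma oneSubFinRank (K : M →ₗ[ℂ] M) (hK : FiniteDimensional ℂ (LinearMap.range K)) :
    FiniteDimensional ℂ (LinearMap.ker (LinearMap.id - K)) ∧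
    FiniteDimensional ℂ (M ⧸ LinearMap.range (LinearMap.id - K)) ∧
    Module.finrank ℂ (LinearMap.ker (LinearMap.id - K)) =
      Module.finrank ℂ (M ⧸ LinearMap.range (LinearMap.id - K)) := by
  classical
  haveI := hK
  set p := LinearMap.range K with hp
  set f : M →ₗ[ℂ] M := LinearMap.id - K with hf
  have hfx : ∀ x, f x = x - K x := fun x => rfl
  have hmap : ∀ x ∈ p, f x ∈ p := fun x hx => by
    rw [hfx]; exact p.sub_mem hx ⟨x, rfl⟩
  have hcomap : ∀ x, f x ∈ p → x ∈ p := fun x hx => by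
    have : x = f x + K x := by rw [hfx]; abel
    rw [this]; exact p.add_mem hx ⟨x, rfl⟩
  have hcover : ∀ x : M, ∃ y ∈ p, ∃ z, x = y + f z := fun x =>
    ⟨K x, ⟨x, rfl⟩, x, by rw [hfx]; abel⟩
  have ek := kerEquivRestrict f hmap hcomap
  have ec := cokerEquivRestrict f hmap hcomap hcover
  haveI h1 : FiniteDimensional ℂ (LinearMap.ker (f.restrict hmap)) := inferInstance
  haveI h2 : FiniteDimensional ℂ (LinearMap.ker f) := ek.finiteDimensional
  haveI h3 : FiniteDimensional ℂ (p ⧸ LinearMap.range (f.restrict hmap)) := inferInstance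
  haveI h4 : FiniteDimensional ℂ (M ⧸ LinearMap.range f) := ec.finiteDimensional
  refine ⟨h2, h4, ?_⟩
  have rn := LinearMap.finrank_range_add_finrank_ker (f.restrict hmap)
  have qd := Submodule.finrank_quotient_add_finrank (LinearMap.range (f.restrict hmap))
  have e1 : Module.finrank ℂ (LinearMap.ker f) =
      Module.finrank ℂ (LinearMap.ker (f.restrict hmap)) := ek.symm.finrank_eq
  have e2 : Module.finrank ℂ (M ⧸ LinearMap.range f) =
      Module.finrank ℂ (p ⧸ LinearMap.range (f.restrict hmap)) := ec.symm.finrank_eq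
  omega

end Alg

/-! ### Banach-space auxiliary lemmas -/

variable {E : Type*} [NormedAddCommGroup E] [NormedSpace ℂ E] [CompleteSpace E]

set_option maxHeartbeats 1000000 in
/-- A continuous linear map with finite-dimensional kernel and cokernel has closed range. -/
private lemma closedRangeOfFinCoker (f : E →L[ℂ] E)
    (hker : FiniteDimensional ℂ (f.ker))
    (hcok : FiniteDimensional ℂ (E ⧸ f.range)) :
    IsClosed ((f.range : Submodule ℂ E) : Set E) := by
  classical
  haveI := hker
  haveI := hcok
  obtain ⟨N, hN⟩ := Submodule.exists_isCompl (f.range)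
  haveI hNfin : FiniteDimensional ℂ N :=
    (Submodule.quotientEquivOfIsCompl _ _ hN).finiteDimensional
  haveI : CompleteSpace N := (Submodule.closed_of_finiteDimensional N).completeSpace_coe
  obtain ⟨P, hP⟩ := Submodule.ClosedComplemented.of_finiteDimensional (f.ker)
  set Pc : E →L[ℂ] E := (f.ker).subtypeL.comp P with hPc
  have hPcker : ∀ x ∈ f.ker, Pc x = x := by
    intro x hx
    show ((P x : f.ker) : E) = x
    rw [show P x = ⟨x, hx⟩ from hP ⟨x, hx⟩]
  set Mc := Pc.ker with hMc
  have hMcClosed : IsClosed (Mc : Set E) := ContinuousLinearMap.isClosed_ker Pc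
  haveI : CompleteSpace Mc := hMcClosed.completeSpace_coe
  have hPcrange : ∀ x : E, Pc x ∈ f.ker := fun x => (P x).2
  have hPcidem : ∀ x : E, Pc (Pc x) = Pc x := fun x => hPcker _ (hPcrange x)
  have hdecomp : ∀ x : E, x - Pc x ∈ Mc := by
    intro x
    show Pc (x - Pc x) = 0
    rw [map_sub, hPcidem, sub_self]
  -- the glueing map
  set g : (Mc × N) →L[ℂ] E := (f.comp Mc.subtypeL).coprod N.subtypeL with hg
  have hgapply : ∀ z : Mc × N, g z = f (z.1 : E) + (z.2 : E) := fun z => rfl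
  have hginj : g.ker = ⊥ := by
    rw [LinearMap.ker_eq_bot']
    rintro ⟨m, n⟩ hz
    rw [ContinuousLinearMap.coe_coe, hgapply] at hz
    have h1 : f (m : E) = 0 ∧ (n : E) = 0 := by
      have hmem1 : f (m : E) ∈ f.range := ⟨m, rfl⟩
      have hmem2 : f (m : E) ∈ N := by
        have : f (m : E) = -(n : E) := by linear_combination (norm := abel) hz
        rw [this]; exact N.neg_mem n.2
      have : f (m : E) = 0 := by
        have := hN.1
        rw [Submodule.disjoint_def] at this
        exact this _ hmem1 hmem2
      refine ⟨this, by rw [this] at hz; simpa using hz⟩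
    have hm : (m : E) ∈ f.ker ⊓ Mc := ⟨h1.1, m.2⟩
    have hMcdisj : f.ker ⊓ Mc = ⊥ := by
      rw [eq_bot_iff]
      rintro x ⟨hx1, hx2⟩
      have : Pc x = x := hPcker x hx1
      have hx0 : Pc x = 0 := hx2
      simp only [Submodule.mem_bot]
      rw [← this, hx0]
    have hm0 : (m : E) = 0 := by
      have := hMcdisj ▸ hm
      simpa using this
    refine Prod.ext (Subtype.ext hm0) (Subtype.ext h1.2)
  have hgsurj : g.range = ⊤ := by
    rw [LinearMap.range_eq_top]
    intro x
    have hx : x ∈ f.range ⊔ N := by rw [hN.sup_eq_top]; trivial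
    obtain ⟨r, hr, n, hn, rfl⟩ := Submodule.mem_sup.mp hx
    obtain ⟨a, rfl⟩ := hr
    refine ⟨(⟨a - Pc a, hdecomp a⟩, ⟨n, hn⟩), ?_⟩
    rw [ContinuousLinearMap.coe_coe, hgapply]
    simp only
    have : f (a - Pc a) = f a := by
      rw [map_sub, (show f (Pc a) = 0 from LinearMap.mem_ker.mp (hPcrange a)), sub_zero]
    rw [this]; rfl
  set e := ContinuousLinearEquiv.ofBijective g hginj hgsurj with he
  have himage : ((f.range : Submodule ℂ E) : Set E) =
      e '' ((Set.univ : Set Mc) ×ˢ ({0} : Set N)) := by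
    ext x
    constructor
    · rintro ⟨a, rfl⟩
      refine ⟨(⟨a - Pc a, hdecomp a⟩, 0), ⟨trivial, rfl⟩, ?_⟩
      show g _ = f a
      rw [hgapply]
      simp only [Submodule.coe_zero, add_zero]
      rw [map_sub, (show f (Pc a) = 0 from LinearMap.mem_ker.mp (hPcrange a)), sub_zero]
    · rintro ⟨⟨m, n⟩, ⟨-, hn⟩, rfl⟩
      have hn0 : n = 0 := hn
      show g (m, n) ∈ f.range
      rw [hgapply, hn0]
      simp only [Submodule.coe_zero, add_zero]
      exact ⟨m, rfl⟩
  rw [himage]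
  exact (e.toHomeomorph.isClosedMap) _ (isClosed_univ.prod isClosed_singleton)

set_option maxHeartbeats 1000000 in
/-- Stability of "Weyl data" under small scalar perturbations. -/
private lemma stabWeyl (W : E →L[ℂ] E)
    (hker : FiniteDimensional ℂ (W.ker))
    (hcok : FiniteDimensional ℂ (E ⧸ W.range))
    (hind : Module.finrank ℂ (W.ker) = Module.finrank ℂ (E ⧸ W.range)) :
    ∃ ε > (0:ℝ), ∀ μ : ℂ, ‖μ‖ < ε →
      FiniteDimensional ℂ ((W - μ • 1).ker) ∧
      FiniteDimensional ℂ (E ⧸ (W - μ • 1).range) ∧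
      Module.finrank ℂ ((W - μ • 1).ker) =
        Module.finrank ℂ (E ⧸ (W - μ • 1).range) := by
  classical
  haveI := hker
  haveI := hcok
  obtain ⟨N, hN⟩ := Submodule.exists_isCompl (W.range)
  haveI hNfin : FiniteDimensional ℂ N :=
    (Submodule.quotientEquivOfIsCompl _ _ hN).finiteDimensional
  have hdim : Module.finrank ℂ (W.ker) = Module.finrank ℂ N :=
    hind.trans (Submodule.quotientEquivOfIsCompl _ _ hN).finrank_eq
  let ι : (W.ker) ≃ₗ[ℂ] N := LinearEquiv.ofFinrankEq _ _ hdim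
  obtain ⟨P, hP⟩ := Submodule.ClosedComplemented.of_finiteDimensional (W.ker)
  let ιL : (W.ker) →L[ℂ] E :=
    LinearMap.toContinuousLinearMap (N.subtype.comp ι.toLinearMap)
  let J : E →L[ℂ] E := ιL.comp P
  have hJapply : ∀ x, J x = ((ι (P x) : N) : E) := fun x => rfl
  have hJmem : ∀ x, J x ∈ N := fun x => by rw [hJapply]; exact (ι (P x)).2
  set V : E →L[ℂ] E := W + J with hV
  have hVapply : ∀ x, V x = W x + J x := fun x => rfl
  have hVinj : V.ker = ⊥ := by
    rw [LinearMap.ker_eq_bot']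
    intro x hx
    have hx' : W x + J x = 0 := by rw [← hVapply]; exact hx
    have hW0 : W x = 0 := by
      have h1 : W x ∈ W.range := ⟨x, rfl⟩
      have h2 : W x ∈ N := by
        have hwx : W x = -J x := by linear_combination (norm := abel) hx'
        rw [hwx]; exact N.neg_mem (hJmem x)
      exact (Submodule.disjoint_def.mp hN.1) _ h1 h2
    have hJ0 : J x = 0 := by rw [hW0, zero_add] at hx'; exact hx'
    have hxker : x ∈ W.ker := hW0
    have hPx : P x = ⟨x, hxker⟩ := hP ⟨x, hxker⟩
    have h3 : ((ι ⟨x, hxker⟩ : N) : E) = 0 := by rw [← hPx, ← hJapply]; exact hJ0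
    have h4 : ι ⟨x, hxker⟩ = 0 := Subtype.ext h3
    have h5 : (⟨x, hxker⟩ : W.ker) = 0 := by
      apply ι.injective; rw [h4, map_zero]
    exact congrArg Subtype.val h5
  have hVsurj : V.range = ⊤ := by
    rw [LinearMap.range_eq_top]
    intro y
    have hy : y ∈ W.range ⊔ N := by rw [hN.sup_eq_top]; trivial
    obtain ⟨r, hrmem, nn, hnmem, rfl⟩ := Submodule.mem_sup.mp hy
    obtain ⟨a, rfl⟩ := hrmem
    set kk : W.ker := ι.symm ⟨nn, hnmem⟩ with hkk
    refine ⟨a - ((P a : W.ker) : E) + (kk : E), ?_⟩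
    have hWx : W (a - ((P a : W.ker) : E) + (kk : E)) = W a := by
      rw [map_add, map_sub]
      have h1 : W ((P a : W.ker) : E) = 0 := (P a).2
      have h2 : W (kk : E) = 0 := kk.2
      rw [h1, h2, sub_zero, add_zero]
    have hPx : P (a - ((P a : W.ker) : E) + (kk : E)) = kk := by
      rw [map_add, map_sub, hP (P a), hP kk]
      simp
    rw [ContinuousLinearMap.coe_coe, hVapply, hWx, hJapply, hPx]
    congr 1
    show ((ι kk : N) : E) = nn
    rw [hkk, ι.apply_symm_apply]
  let Ve := ContinuousLinearEquiv.ofBijective V hVinj hVsurj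
  set Vi : E →L[ℂ] E := (Ve.symm : E →L[ℂ] E) with hVi
  have hVeV : ∀ x, Ve x = V x := fun x => rfl
  have hVVi : V * Vi = 1 := by
    ext x
    show V (Ve.symm x) = x
    rw [← hVeV, Ve.apply_symm_apply]
  have hViV : Vi * V = 1 := by
    ext x
    show Ve.symm (V x) = x
    rw [← hVeV, Ve.symm_apply_apply]
  set uV : (E →L[ℂ] E)ˣ := ⟨V, Vi, hVVi, hViV⟩ with huV
  refine ⟨(‖Vi‖ + 1)⁻¹, by positivity, ?_⟩
  intro μ hμ
  have hlt : ‖μ • Vi‖ < 1 := by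
    rw [norm_smul μ Vi]
    calc ‖μ‖ * ‖Vi‖ ≤ ‖μ‖ * (‖Vi‖ + 1) := by nlinarith [norm_nonneg μ, norm_nonneg Vi]
      _ < (‖Vi‖ + 1)⁻¹ * (‖Vi‖ + 1) := by
          apply mul_lt_mul_of_pos_right hμ
          positivity
      _ = 1 := by
          rw [inv_mul_cancel₀]
          positivity
  set u1 : (E →L[ℂ] E)ˣ := Units.oneSub (μ • Vi) hlt with hu1
  set uμ : (E →L[ℂ] E)ˣ := uV * u1 with huμdef
  have huμ : (uμ : E →L[ℂ] E) = V - μ • 1 := by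
    show V * (1 - μ • Vi) = V - μ • 1
    rw [mul_sub, mul_one, mul_smul_comm, hVVi]
  set K : E →L[ℂ] E := ((uμ⁻¹ : (E →L[ℂ] E)ˣ) : E →L[ℂ] E) * J with hK
  have hfactor : W - μ • 1 = (uμ : E →L[ℂ] E) * (1 - K) := by
    rw [mul_sub, mul_one, hK, ← mul_assoc, Units.mul_inv, one_mul, huμ, hV]
    abel
  set KL : E →ₗ[ℂ] E := (K : E →ₗ[ℂ] E) with hKL
  have hKLrange : FiniteDimensional ℂ (LinearMap.range KL) := by
    set uinvL : E →ₗ[ℂ] E := (((uμ⁻¹ : (E →L[ℂ] E)ˣ) : E →L[ℂ] E) : E →ₗ[ℂ] E) with huinvL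
    have hle : LinearMap.range KL ≤ N.map uinvL := by
      rintro y ⟨x, rfl⟩
      exact ⟨J x, hJmem x, rfl⟩
    haveI : FiniteDimensional ℂ (N.map uinvL) := Module.Finite.map _ _
    exact Submodule.finiteDimensional_of_le hle
  obtain ⟨hf1, hf2, hf3⟩ := oneSubFinRank KL hKLrange
  have hcoe1K : ∀ x : E, (1 - K) x = ((LinearMap.id - KL : E →ₗ[ℂ] E)) x := fun x => by
    simp [hKL]
  have huinj : Function.Injective ((uμ : E →L[ℂ] E)) := by
    intro a b hab
    have h1 := congrArg (fun y => ((uμ⁻¹ : (E →L[ℂ] E)ˣ) : E →L[ℂ] E) y) hab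
    simpa only [← ContinuousLinearMap.mul_apply, Units.inv_mul,
      ContinuousLinearMap.one_apply] using h1
  have hWμ : ∀ x, (W - μ • 1) x = (uμ : E →L[ℂ] E) ((1 - K) x) := fun x => by
    rw [hfactor]; rfl
  have hkerEq : (W - μ • 1).ker = LinearMap.ker (LinearMap.id - KL) := by
    ext x
    simp only [LinearMap.mem_ker]
    rw [ContinuousLinearMap.coe_coe, hWμ, ← hcoe1K]
    constructor
    · intro hx
      apply huinj
      rw [hx, map_zero]
    · intro hx
      rw [hx, map_zero]
  let equμ : E ≃ₗ[ℂ] E := LinearEquiv.ofLinear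
    (((uμ : E →L[ℂ] E)) : E →ₗ[ℂ] E)
    ((((uμ⁻¹ : (E →L[ℂ] E)ˣ) : E →L[ℂ] E)) : E →ₗ[ℂ] E)
    (by
      ext x
      show (uμ : E →L[ℂ] E) (((uμ⁻¹ : (E →L[ℂ] E)ˣ) : E →L[ℂ] E) x) = x
      rw [← ContinuousLinearMap.mul_apply, Units.mul_inv, ContinuousLinearMap.one_apply])
    (by
      ext x
      show ((uμ⁻¹ : (E →L[ℂ] E)ˣ) : E →L[ℂ] E) ((uμ : E →L[ℂ] E) x) = x
      rw [← ContinuousLinearMap.mul_apply, Units.inv_mul, ContinuousLinearMap.one_apply])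
  have hequμ : ∀ x, equμ x = (uμ : E →L[ℂ] E) x := fun x => rfl
  have hmapR : (LinearMap.range (LinearMap.id - KL)).map (equμ : E →ₗ[ℂ] E) =
      (W - μ • 1).range := by
    ext y
    simp only [Submodule.mem_map, LinearMap.mem_range]
    constructor
    · rintro ⟨y', ⟨x, rfl⟩, rfl⟩
      refine ⟨x, ?_⟩
      show (W - μ • 1) x = equμ (((LinearMap.id - KL : E →ₗ[ℂ] E)) x)
      rw [hequμ, hWμ, hcoe1K]
    · rintro ⟨x, rfl⟩
      refine ⟨((LinearMap.id - KL : E →ₗ[ℂ] E)) x, ⟨x, rfl⟩, ?_⟩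
      show equμ (((LinearMap.id - KL : E →ₗ[ℂ] E)) x) = (W - μ • 1) x
      rw [hequμ, hWμ, hcoe1K]
  have ecok : (E ⧸ LinearMap.range (LinearMap.id - KL)) ≃ₗ[ℂ]
      (E ⧸ (W - μ • 1).range) :=
    Submodule.Quotient.equiv _ _ equμ hmapR
  haveI := hf2
  refine ⟨by rw [hkerEq]; exact hf1, ecok.finiteDimensional, ?_⟩
  rw [hkerEq, hf3]
  exact ecok.finrank_eq

end Auxiliary

section Main

variable {X : Type*} [NormedAddCommGroup X] [NormedSpace ℂ X] [CompleteSpace X]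

private lemma usF_of_boundedBelow (f : X →L[ℂ] X)
    (hb : ∃ c > (0:ℝ), ∀ x : X, c * ‖x‖ ≤ ‖f x‖) :
    IsUpperSemiFredholm f ∧ indexLE0 f := by
  obtain ⟨c, hc, hf⟩ := hb
  have hker : f.ker = ⊥ := by
    rw [LinearMap.ker_eq_bot']
    intro x hx
    have h1 := hf x
    rw [ContinuousLinearMap.coe_coe] at hx; rw [hx] at h1
    simp only [norm_zero] at h1
    have h2 : ‖x‖ ≤ 0 := by nlinarith
    exact norm_le_zero_iff.mp h2
  constructor
  · constructor
    · rw [hker]; infer_instance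
    · have hanti : AntilipschitzWith (⟨c, hc.le⟩ : NNReal)⁻¹ f := by
        apply f.antilipschitz_of_bound
        intro x
        show ‖x‖ ≤ (c : ℝ)⁻¹ * ‖f x‖
        rw [inv_mul_eq_div, le_div_iff₀ hc]
        nlinarith [hf x]
      have : IsClosed (Set.range f) := hanti.isClosed_range f.uniformContinuous
      simpa [LinearMap.coe_range] using this
  · show (Module.finrank ℂ (f.ker) : Cardinal) ≤ _
    rw [hker]
    simp [finrank_bot]

private lemma restr_coe (T : X →L[ℂ] X) (n : ℕ) (x : (T ^ n).range) :
    ((restr T n x : (T ^ n).range) : X) = T x := rfl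

private lemma range_pow_zero (T : X →L[ℂ] X) : (T ^ 0).range = ⊤ := by
  rw [pow_zero]
  exact LinearMap.range_eq_top.mpr (fun x => ⟨x, rfl⟩)

private noncomputable def e0 (T : X →L[ℂ] X) : ((T ^ 0).range : Submodule ℂ X) ≃ₗ[ℂ] X :=
  LinearEquiv.ofTop _ (range_pow_zero T)

private lemma e0_comm (T : X →L[ℂ] X) (x : (T ^ 0).range) :
    e0 T (restr T 0 x) = (T : X →ₗ[ℂ] X) (e0 T x) := rfl

private lemma kerCLM (f : X →L[ℂ] X) :
    LinearMap.ker (f : X →ₗ[ℂ] X) = f.ker := by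
  ext x; simp [LinearMap.mem_ker]

private lemma rangeCLM (f : X →L[ℂ] X) :
    LinearMap.range (f : X →ₗ[ℂ] X) = f.range := by
  ext x; simp [LinearMap.mem_range]

private lemma powCLM (T : X →L[ℂ] X) :
    ∀ (j : ℕ) (x : X), (T ^ j) x = (((T : X →ₗ[ℂ] X)) ^ j) x := by
  intro j
  induction j with
  | zero => intro x; rfl
  | succ i ih =>
    intro x
    calc (T ^ (i + 1)) x = T ((T ^ i) x) := by rw [pow_succ']; rfl
      _ = T ((((T : X →ₗ[ℂ] X)) ^ i) x) := by rw [ih]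
      _ = (((T : X →ₗ[ℂ] X)) ^ (i + 1)) x := by rw [pow_succ']; rfl

private lemma memTR (T : X →L[ℂ] X) (n : ℕ) {x : X} (hx : x ∈ (T ^ n).range) :
    T x ∈ (T ^ n).range := by
  obtain ⟨w, rfl⟩ := hx
  refine ⟨T w, ?_⟩
  calc (T ^ n) (T w) = (T ^ n * T) w := rfl
    _ = (T * T ^ n) w := by rw [← pow_succ, pow_succ']
    _ = T ((T ^ n) w) := rfl

private lemma isBWeyl_of_weyl (T : X →L[ℂ] X) (h1 : IsFredholm T) (h2 : fredIndex T = 0) :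
    IsBWeyl T := by
  obtain ⟨hk, hr, hc⟩ := h1
  haveI := hk
  haveI := hc
  have hcomm := e0_comm T
  have ek := kerEquivConj (restr T 0) (T : X →ₗ[ℂ] X) (e0 T) hcomm
  have ec := cokerEquivConj (restr T 0) (T : X →ₗ[ℂ] X) (e0 T) hcomm
  haveI hkl : FiniteDimensional ℂ (LinearMap.ker (T : X →ₗ[ℂ] X)) := by
    rw [kerCLM]; exact hk
  haveI hcl : FiniteDimensional ℂ (X ⧸ LinearMap.range (T : X →ₗ[ℂ] X)) := by
    rw [rangeCLM]; exact hc
  have hind : Module.finrank ℂ (T.ker) =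
      Module.finrank ℂ (X ⧸ (T.range : Submodule ℂ X)) := by
    have h2' := sub_eq_zero.mp h2
    exact_mod_cast h2'
  refine ⟨0, ?_, ?_, ?_, ?_, ?_⟩
  · rw [range_pow_zero, Submodule.top_coe]
    exact isClosed_univ
  · exact ek.symm.finiteDimensional
  · have hset : ((LinearMap.range (restr T 0) :
        Submodule ℂ ((T ^ 0).range : Submodule ℂ X)) :
        Set ((T ^ 0).range : Submodule ℂ X)) =
        (fun x : ((T ^ 0).range : Submodule ℂ X) => (x : X)) ⁻¹'
          ((T.range : Submodule ℂ X) : Set X) := by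
      ext x
      simp only [Set.mem_preimage, SetLike.mem_coe, LinearMap.mem_range]
      constructor
      · rintro ⟨y, rfl⟩
        exact ⟨(y : X), (restr_coe T 0 y).symm⟩
      · rintro ⟨z, hz⟩
        have hz' : z ∈ (T ^ 0).range := by rw [range_pow_zero]; trivial
        exact ⟨⟨z, hz'⟩, Subtype.ext (by rw [restr_coe]; exact hz)⟩
    rw [hset]
    exact hr.preimage continuous_subtype_val
  · exact ec.symm.finiteDimensional
  · calc Module.finrank ℂ (LinearMap.ker (restr T 0))
        = Module.finrank ℂ (LinearMap.ker (T : X →ₗ[ℂ] X)) := ek.finrank_eq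
      _ = Module.finrank ℂ (T.ker) := by rw [kerCLM]
      _ = Module.finrank ℂ (X ⧸ (T.range : Submodule ℂ X)) := hind
      _ = Module.finrank ℂ (X ⧸ LinearMap.range (T : X →ₗ[ℂ] X)) := by rw [rangeCLM]
      _ = Module.finrank ℂ (((T ^ 0).range : Submodule ℂ X) ⧸
            LinearMap.range (restr T 0)) := ec.symm.finrank_eq

set_option maxHeartbeats 4000000 in
private lemma weyl_of_usF_bweyl (T : X →L[ℂ] X) (hu : IsUpperSemiFredholm T) (hB : IsBWeyl T) :
    IsFredholm T ∧ fredIndex T = 0 := by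
  classical
  obtain ⟨hk, hr⟩ := hu
  obtain ⟨n, hRcl, hk0, hrcl0, hq0, hi0⟩ := hB
  haveI := hk
  haveI := hk0
  haveI := hq0
  cases n with
  | zero =>
    have hcomm := e0_comm T
    have ek := kerEquivConj (restr T 0) (T : X →ₗ[ℂ] X) (e0 T) hcomm
    have ec := cokerEquivConj (restr T 0) (T : X →ₗ[ℂ] X) (e0 T) hcomm
    haveI hcok : FiniteDimensional ℂ (X ⧸ (T.range : Submodule ℂ X)) := by
      rw [← rangeCLM]
      exact ec.finiteDimensional
    refine ⟨⟨hk, hr, hcok⟩, ?_⟩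
    have heq : Module.finrank ℂ (T.ker) =
        Module.finrank ℂ (X ⧸ (T.range : Submodule ℂ X)) := by
      have e1 : Module.finrank ℂ (T.ker) =
          Module.finrank ℂ (LinearMap.ker (restr T 0)) := by
        rw [← kerCLM]; exact ek.symm.finrank_eq
      have e2 : Module.finrank ℂ (X ⧸ (T.range : Submodule ℂ X)) =
          Module.finrank ℂ (((T ^ 0).range : Submodule ℂ X) ⧸
            LinearMap.range (restr T 0)) := by
        rw [← rangeCLM]; exact ec.symm.finrank_eq
      rw [e1, e2, hi0]
    unfold fredIndex
    rw [heq]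
    exact sub_self _
  | succ m =>
    haveI finKT : FiniteDimensional ℂ (LinearMap.ker (T : X →ₗ[ℂ] X)) := by
      rw [kerCLM]; exact hk
    set Tl : X →ₗ[ℂ] X := (T : X →ₗ[ℂ] X) with hTldef
    set R : Submodule ℂ X := (T ^ (m + 1)).range with hRdef
    have hcpow : ∀ x : X, (T ^ (m + 1)) x = (Tl ^ (m + 1)) x := fun x =>
      powCLM T (m + 1) x
    have hTR : ∀ x ∈ R, Tl x ∈ R := fun x hx => memTR T (m + 1) hx
    have hRleRange : R ≤ LinearMap.range Tl := by
      rintro x ⟨w, rfl⟩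
      refine ⟨(T ^ m) w, ?_⟩
      calc Tl ((T ^ m) w) = (T * T ^ m) w := rfl
        _ = (T ^ (m + 1)) w := by rw [← pow_succ']
    set P : Submodule ℂ X := R.comap Tl with hPdef
    have hRleP : R ≤ P := fun x hx => hTR x hx
    have hkerleP : LinearMap.ker Tl ≤ P := by
      intro x hx
      show Tl x ∈ R
      rw [LinearMap.mem_ker.mp hx]
      exact R.zero_mem
    set T₀ := restr T (m + 1) with hT₀def
    set g : P →ₗ[ℂ] R := LinearMap.codRestrict R (Tl.comp P.subtype) (fun x => x.2) with hgdef
    have hgval : ∀ x : P, ((g x : R) : X) = Tl (x : X) := fun x => rfl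
    set δ : P →ₗ[ℂ] (R ⧸ LinearMap.range T₀) := (LinearMap.range T₀).mkQ.comp g with hδdef
    have hδapply : ∀ x : P, δ x = Submodule.Quotient.mk (g x) := fun x => rfl
    have hδsurj : Function.Surjective δ := by
      intro qq
      obtain ⟨z, rfl⟩ := Submodule.Quotient.mk_surjective _ qq
      obtain ⟨a, ha⟩ := hRleRange z.2
      have haP : a ∈ P := by show Tl a ∈ R; rw [ha]; exact z.2
      refine ⟨⟨a, haP⟩, ?_⟩
      rw [hδapply]
      congr 1
      exact Subtype.ext (by rw [hgval]; exact ha)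
    have hδker : LinearMap.ker δ = (LinearMap.ker Tl ⊔ R).comap P.subtype := by
      ext x
      simp only [LinearMap.mem_ker, Submodule.mem_comap]
      constructor
      · intro hx
        have hx' : g x ∈ LinearMap.range T₀ := by
          have h0 : Submodule.Quotient.mk (g x) = (0 : R ⧸ LinearMap.range T₀) := by
            rw [← hδapply]; exact hx
          rwa [Submodule.Quotient.mk_eq_zero] at h0
        obtain ⟨r, hrx⟩ := hx'
        have hval : T ((r : R) : X) = Tl (x : X) := by
          have h1 := congrArg (fun w : R => (w : X)) hrx
          rw [show ((T₀ r : R) : X) = T ((r : R) : X) from restr_coe T (m+1) r,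
            hgval] at h1
          exact h1
        refine Submodule.mem_sup.mpr ⟨(x : X) - ((r : R) : X), ?_, ((r : R) : X), r.2, by abel⟩
        show Tl ((x : X) - ((r : R) : X)) = 0
        rw [map_sub]
        have h2 : Tl ((r : R) : X) = T ((r : R) : X) := rfl
        rw [h2, hval, sub_self]
      · intro hx
        obtain ⟨kk, hkk, rr, hrr, hsum⟩ := Submodule.mem_sup.mp hx
        rw [hδapply, Submodule.Quotient.mk_eq_zero]
        refine ⟨⟨rr, hrr⟩, ?_⟩
        apply Subtype.ext
        have hgoal : T rr = Tl ((x : P) : X) := by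
          have h2 : Tl ((x : P) : X) = Tl kk + Tl rr := by
            rw [← map_add]
            exact congrArg Tl hsum.symm
          rw [h2, LinearMap.mem_ker.mp hkk, zero_add]; rfl
        calc ((T₀ ⟨rr, hrr⟩ : R) : X) = T rr := restr_coe T (m+1) ⟨rr, hrr⟩
          _ = Tl ((x : P) : X) := hgoal
          _ = ((g x : R) : X) := (hgval x).symm
    set R' : Submodule ℂ P := R.comap P.subtype with hR'def
    have hR'le : R' ≤ LinearMap.ker δ := by
      intro x hx
      show δ x = 0
      rw [hδapply, Submodule.Quotient.mk_eq_zero]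
      refine ⟨⟨(x : P), hx⟩, ?_⟩
      apply Subtype.ext
      calc ((T₀ ⟨(x : P), hx⟩ : R) : X) = T ((x : P) : X) := restr_coe T (m+1) _
        _ = Tl ((x : P) : X) := rfl
        _ = ((g x : R) : X) := (hgval x).symm
    set δ' := R'.liftQ δ hR'le with hδ'def
    have hδ'range : LinearMap.range δ' = ⊤ := by
      rw [hδ'def, Submodule.range_liftQ]
      exact LinearMap.range_eq_top.mpr hδsurj
    have hδ'ker : LinearMap.ker δ' = (LinearMap.ker δ).map R'.mkQ := R'.ker_liftQ δ hR'le
    set κ := (LinearMap.ker δ).map R'.mkQ with hκdef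
    set χ : (LinearMap.ker δ) →ₗ[ℂ] (P ⧸ R') := R'.mkQ.comp (LinearMap.ker δ).subtype with hχdef
    have hχrange : LinearMap.range χ = κ := by
      rw [hχdef, LinearMap.range_comp, Submodule.range_subtype, hκdef]
    have hχker : LinearMap.ker χ = R'.comap (LinearMap.ker δ).subtype := by
      simp only [hχdef, LinearMap.ker_comp, Submodule.ker_mkQ]
    have eκ : ((LinearMap.ker δ) ⧸ R'.comap (LinearMap.ker δ).subtype) ≃ₗ[ℂ] κ :=
      (Submodule.quotEquivOfEq _ _ hχker.symm).trans
        ((χ.quotKerEquivRange).trans (LinearEquiv.ofEq _ _ hχrange))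
    have hsupP : LinearMap.ker Tl ⊔ R ≤ P := sup_le hkerleP hRleP
    set eKfull : (LinearMap.ker δ) ≃ₗ[ℂ] (LinearMap.ker Tl ⊔ R : Submodule ℂ X) :=
      (LinearEquiv.ofEq _ _ hδker).trans (Submodule.comapSubtypeEquivOfLe hsupP) with heKfull
    have heKval : ∀ x : LinearMap.ker δ, ((eKfull x : _) : X) = (((x : P) : X)) := by
      intro x
      show ((Submodule.comapSubtypeEquivOfLe hsupP ((LinearEquiv.ofEq _ _ hδker) x) : _) : X)
          = (((x : P) : X))
      rw [Submodule.comapSubtypeEquivOfLe_apply_coe, LinearEquiv.coe_ofEq_apply hδker x]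
    have hmapEq : (R'.comap (LinearMap.ker δ).subtype).map (eKfull : _ →ₗ[ℂ] _) =
        R.comap (LinearMap.ker Tl ⊔ R : Submodule ℂ X).subtype := by
      ext y
      simp only [Submodule.mem_map, Submodule.mem_comap]
      constructor
      · rintro ⟨x, hx, rfl⟩
        show ((eKfull x : _) : X) ∈ R
        rw [heKval]
        exact hx
      · intro hy
        refine ⟨eKfull.symm y, ?_, by simp⟩
        show (((eKfull.symm y : LinearMap.ker δ) : P) : X) ∈ R
        have h1 : ((eKfull (eKfull.symm y) : _) : X) = (((eKfull.symm y : LinearMap.ker δ) : P) : X) :=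
          heKval _
        rw [eKfull.apply_symm_apply] at h1
        rw [← h1]
        exact hy
    have e2 : ((LinearMap.ker Tl : Submodule ℂ X) ⧸
          (LinearMap.ker Tl ⊓ R).comap (LinearMap.ker Tl).subtype)
        ≃ₗ[ℂ] ((LinearMap.ker Tl ⊔ R : Submodule ℂ X) ⧸
          R.comap (LinearMap.ker Tl ⊔ R : Submodule ℂ X).subtype) :=
      LinearMap.quotientInfEquivSupQuotient (LinearMap.ker Tl) R
    have eκ2 : ((LinearMap.ker δ) ⧸ R'.comap (LinearMap.ker δ).subtype) ≃ₗ[ℂ]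
        ((LinearMap.ker Tl ⊔ R : Submodule ℂ X) ⧸
          R.comap (LinearMap.ker Tl ⊔ R : Submodule ℂ X).subtype) :=
      Submodule.Quotient.equiv _ _ eKfull hmapEq
    set s₀ : Submodule ℂ (LinearMap.ker Tl) :=
      (LinearMap.ker Tl ⊓ R).comap (LinearMap.ker Tl).subtype with hs₀def
    have eκchain : κ ≃ₗ[ℂ] ((LinearMap.ker Tl : Submodule ℂ X) ⧸ s₀) :=
      eκ.symm.trans (eκ2.trans e2.symm)
    haveI finκ : FiniteDimensional ℂ κ := eκchain.symm.finiteDimensional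
    have hκrank : Module.finrank ℂ κ =
        Module.finrank ℂ ((LinearMap.ker Tl : Submodule ℂ X) ⧸ s₀) := eκchain.finrank_eq
    haveI finQmod : FiniteDimensional ℂ ((P ⧸ R') ⧸ LinearMap.ker δ') := by
      have eq1 : ((P ⧸ R') ⧸ LinearMap.ker δ') ≃ₗ[ℂ] (R ⧸ LinearMap.range T₀) :=
        (δ'.quotKerEquivRange).trans (LinearEquiv.ofTop _ hδ'range)
      exact eq1.symm.finiteDimensional
    haveI finQ : FiniteDimensional ℂ (P ⧸ R') := by
      apply finExt (LinearMap.ker δ')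
      · rw [hδ'ker]; exact finκ
      · exact finQmod
    have hQrank : Module.finrank ℂ (P ⧸ R') =
        Module.finrank ℂ (R ⧸ LinearMap.range T₀) + Module.finrank ℂ κ := by
      have rn := LinearMap.finrank_range_add_finrank_ker δ'
      have h1 : Module.finrank ℂ (LinearMap.range δ') =
          Module.finrank ℂ (R ⧸ LinearMap.range T₀) :=
        (LinearEquiv.ofTop _ hδ'range).finrank_eq
      have h2 : Module.finrank ℂ (LinearMap.ker δ') = Module.finrank ℂ κ := by rw [hδ'ker]
      omega
    set Tb : (X ⧸ R) →ₗ[ℂ] (X ⧸ R) := Submodule.mapQ R R Tl (fun x hx => hTR x hx) with hTbdef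
    have hTb : ∀ x : X, Tb (Submodule.Quotient.mk x) = Submodule.Quotient.mk (Tl x) :=
      fun x => rfl
    set ψ : P →ₗ[ℂ] (X ⧸ R) := R.mkQ.comp P.subtype with hψdef
    have hψapply : ∀ x : P, ψ x = Submodule.Quotient.mk ((x : P) : X) := fun x => rfl
    have hψker : LinearMap.ker ψ = R' := by
      rw [hψdef, LinearMap.ker_comp, Submodule.ker_mkQ, hR'def]
    have hψrange : LinearMap.range ψ = LinearMap.ker Tb := by
      ext v
      constructor
      · rintro ⟨x, rfl⟩
        show Tb (ψ x) = 0
        rw [hψapply, hTb, Submodule.Quotient.mk_eq_zero]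
        exact x.2
      · intro hv
        obtain ⟨x, rfl⟩ := Submodule.Quotient.mk_surjective _ v
        have hx : Tl x ∈ R := by
          have h0 : Tb (Submodule.Quotient.mk x) = 0 := hv
          rwa [hTb, Submodule.Quotient.mk_eq_zero] at h0
        exact ⟨⟨x, hx⟩, rfl⟩
    have eQk : (P ⧸ R') ≃ₗ[ℂ] (LinearMap.ker Tb) :=
      (Submodule.quotEquivOfEq _ _ hψker.symm).trans
        ((ψ.quotKerEquivRange).trans (LinearEquiv.ofEq _ _ hψrange))
    haveI finkerTb : FiniteDimensional ℂ (LinearMap.ker Tb) := eQk.finiteDimensional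
    have hTbpow : ∀ (j : ℕ) (x : X), (Tb ^ j) (Submodule.Quotient.mk x) =
        Submodule.Quotient.mk ((Tl ^ j) x) := by
      intro j
      induction j with
      | zero => intro x; rfl
      | succ i ih =>
        intro x
        have h1 : (Tb ^ (i + 1)) (Submodule.Quotient.mk x) =
            (Tb ^ i) (Tb (Submodule.Quotient.mk x)) := by
          rw [pow_succ]; rfl
        rw [h1, hTb, ih]
        have h2 : (Tl ^ i) (Tl x) = (Tl ^ (i + 1)) x := by
          rw [pow_succ]; rfl
        rw [h2]
    haveI finV : FiniteDimensional ℂ (X ⧸ R) := by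
      have hfin : ∀ j : ℕ, FiniteDimensional ℂ (LinearMap.ker (Tb ^ j)) := by
        intro j
        induction j with
        | zero =>
          have h0 : LinearMap.ker (Tb ^ 0) = ⊥ := by
            rw [pow_zero, Module.End.one_eq_id, LinearMap.ker_id]
          rw [h0]; infer_instance
        | succ i ih =>
          haveI := ih
          set θ : (LinearMap.ker (Tb ^ (i + 1))) →ₗ[ℂ] (LinearMap.ker Tb) :=
            LinearMap.codRestrict (LinearMap.ker Tb)
              ((Tb ^ i).comp (LinearMap.ker (Tb ^ (i + 1))).subtype)
              (fun x => by
                show Tb ((Tb ^ i) (x : X ⧸ R)) = 0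
                have heq : Tb ((Tb ^ i) (x : X ⧸ R)) = (Tb ^ (i + 1)) (x : X ⧸ R) := by
                  calc Tb ((Tb ^ i) (x : X ⧸ R)) = (Tb * Tb ^ i) (x : X ⧸ R) := rfl
                    _ = (Tb ^ (i + 1)) (x : X ⧸ R) := by rw [← pow_succ']
                rw [heq]
                exact x.2) with hθdef
          have hθval : ∀ x : LinearMap.ker (Tb ^ (i + 1)),
              ((θ x : LinearMap.ker Tb) : X ⧸ R) = (Tb ^ i) (x : X ⧸ R) := fun x => rfl
          have hθker : LinearMap.ker θ =
              (LinearMap.ker (Tb ^ i)).comap (LinearMap.ker (Tb ^ (i + 1))).subtype := by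
            ext x
            simp only [LinearMap.mem_ker, Submodule.mem_comap]
            constructor
            · intro hx
              have h1 := congrArg (fun w : LinearMap.ker Tb => (w : X ⧸ R)) hx
              rw [hθval] at h1
              exact h1
            · intro hx
              apply Subtype.ext
              rw [hθval]
              exact hx
          haveI h1 : FiniteDimensional ℂ (LinearMap.ker θ) := by
            rw [hθker]; exact finComapSubtype _ _
          haveI h2 : FiniteDimensional ℂ
              ((LinearMap.ker (Tb ^ (i + 1))) ⧸ LinearMap.ker θ) :=
            Module.Finite.equiv (θ.quotKerEquivRange).symm
          exact finExt _ h1 h2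
      have htop : LinearMap.ker (Tb ^ (m + 1)) = ⊤ := by
        rw [eq_top_iff]
        rintro v -
        obtain ⟨x, rfl⟩ := Submodule.Quotient.mk_surjective _ v
        show (Tb ^ (m + 1)) (Submodule.Quotient.mk x) = 0
        rw [hTbpow, Submodule.Quotient.mk_eq_zero]
        exact ⟨x, hcpow x⟩
      haveI := hfin (m + 1)
      rw [htop] at this
      haveI := this
      exact (Submodule.topEquiv (R := ℂ) (M := X ⧸ R)).finiteDimensional
    have hrangeTb : LinearMap.range Tb = (LinearMap.range Tl).map R.mkQ := by
      ext v
      constructor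
      · rintro ⟨w, rfl⟩
        obtain ⟨x, rfl⟩ := Submodule.Quotient.mk_surjective _ w
        rw [hTb]
        exact ⟨Tl x, ⟨x, rfl⟩, rfl⟩
      · rintro ⟨y, ⟨x, rfl⟩, rfl⟩
        exact ⟨Submodule.Quotient.mk x, hTb x⟩
    have eCok : ((X ⧸ R) ⧸ (LinearMap.range Tl).map R.mkQ) ≃ₗ[ℂ] (X ⧸ LinearMap.range Tl) :=
      Submodule.quotientQuotientEquivQuotient R (LinearMap.range Tl) hRleRange
    haveI fincokTl : FiniteDimensional ℂ (X ⧸ LinearMap.range Tl) := eCok.finiteDimensional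
    haveI fincokT : FiniteDimensional ℂ (X ⧸ (T.range : Submodule ℂ X)) := by
      rw [← rangeCLM]
      rw [← hTldef]
      exact fincokTl
    refine ⟨⟨hk, hr, fincokT⟩, ?_⟩
    have rnV := LinearMap.finrank_range_add_finrank_ker Tb
    have qdV := Submodule.finrank_quotient_add_finrank ((LinearMap.range Tl).map R.mkQ)
    have hck : Module.finrank ℂ (X ⧸ LinearMap.range Tl) =
        Module.finrank ℂ (LinearMap.ker Tb) := by
      have h1 : Module.finrank ℂ (X ⧸ LinearMap.range Tl) =
          Module.finrank ℂ ((X ⧸ R) ⧸ (LinearMap.range Tl).map R.mkQ) := eCok.symm.finrank_eq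
      have h2 : Module.finrank ℂ (LinearMap.range Tb) =
          Module.finrank ℂ ((LinearMap.range Tl).map R.mkQ) := by rw [hrangeTb]
      omega
    have hkTb : Module.finrank ℂ (LinearMap.ker Tb) = Module.finrank ℂ (P ⧸ R') :=
      eQk.symm.finrank_eq
    have hkerT₀eq : LinearMap.ker T₀ = (LinearMap.ker Tl ⊓ R).comap R.subtype := by
      ext x
      simp only [LinearMap.mem_ker, Submodule.mem_comap, Submodule.mem_inf]
      constructor
      · intro hx
        refine ⟨?_, x.2⟩
        show Tl ((x : R) : X) = 0
        have h1 := congrArg (fun w : R => (w : X)) hx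
        rw [show ((T₀ x : R) : X) = T ((x : R) : X) from restr_coe T (m+1) x] at h1
        rw [show Tl ((x : R) : X) = T ((x : R) : X) from rfl]
        rw [h1]
        rfl
      · rintro ⟨h1, -⟩
        apply Subtype.ext
        calc ((T₀ x : R) : X) = T ((x : R) : X) := restr_coe T (m+1) x
          _ = Tl ((x : R) : X) := rfl
          _ = 0 := h1
          _ = (((0 : R) : X)) := rfl
    have ekT₀ : (LinearMap.ker T₀) ≃ₗ[ℂ] (LinearMap.ker Tl ⊓ R : Submodule ℂ X) :=
      (LinearEquiv.ofEq _ _ hkerT₀eq).trans (Submodule.comapSubtypeEquivOfLe inf_le_right)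
    have es₀ : s₀ ≃ₗ[ℂ] (LinearMap.ker Tl ⊓ R : Submodule ℂ X) :=
      Submodule.comapSubtypeEquivOfLe inf_le_left
    have hk₀ : Module.finrank ℂ (LinearMap.ker T₀) = Module.finrank ℂ s₀ :=
      ekT₀.finrank_eq.trans es₀.symm.finrank_eq
    have hks := Submodule.finrank_quotient_add_finrank s₀
    have hkerfr : Module.finrank ℂ (LinearMap.ker Tl) = Module.finrank ℂ (T.ker) := by
      rw [hTldef, kerCLM]
    have hcokfr : Module.finrank ℂ (X ⧸ LinearMap.range Tl) =
        Module.finrank ℂ (X ⧸ (T.range : Submodule ℂ X)) := by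
      rw [hTldef, rangeCLM]
    have hi0' : Module.finrank ℂ (LinearMap.ker T₀) =
        Module.finrank ℂ (R ⧸ LinearMap.range T₀) := hi0
    unfold fredIndex
    have hfinal : Module.finrank ℂ (T.ker) =
        Module.finrank ℂ (X ⧸ (T.range : Submodule ℂ X)) := by
      omega
    rw [hfinal]
    exact sub_self _

set_option maxHeartbeats 1000000 in
private lemma punctured (T : X →L[ℂ] X) (hB : IsBWeyl T) :
    ∃ ε > (0:ℝ), ∀ μ : ℂ, μ ≠ 0 → ‖μ‖ < ε →
      IsUpperSemiFredholm (T - μ • 1) ∧ indexLE0 (T - μ • 1) := by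
  classical
  obtain ⟨n, hRcl, hk0, hrcl0, hq0, hi0⟩ := hB
  haveI := hk0
  haveI := hq0
  set R : Submodule ℂ X := (T ^ n).range with hRdef
  haveI : CompleteSpace R := hRcl.completeSpace_coe
  have hTmem : ∀ x : R, T ((x : R) : X) ∈ R := fun x => memTR T n x.2
  set W : R →L[ℂ] R := (T.comp R.subtypeL).codRestrict R (fun x => hTmem x) with hWdef
  have hWval : ∀ x : R, ((W x : R) : X) = T ((x : R) : X) := fun x => rfl
  have hkerW : W.ker = LinearMap.ker (restr T n) := by
    ext x
    simp only [LinearMap.mem_ker]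
    constructor
    · intro hx
      apply Subtype.ext
      have h1 := congrArg (fun w : R => (w : X)) hx
      rw [ContinuousLinearMap.coe_coe, hWval] at h1
      rw [restr_coe]
      exact h1
    · intro hx
      apply Subtype.ext
      have h1 := congrArg (fun w : R => (w : X)) hx
      rw [restr_coe] at h1
      rw [ContinuousLinearMap.coe_coe, hWval]
      exact h1
  have hrangeW : W.range = LinearMap.range (restr T n) := by
    ext y
    simp only [LinearMap.mem_range]
    constructor
    · rintro ⟨x, rfl⟩
      exact ⟨x, Subtype.ext (by rw [restr_coe, ContinuousLinearMap.coe_coe, hWval])⟩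
    · rintro ⟨x, rfl⟩
      exact ⟨x, Subtype.ext (by rw [ContinuousLinearMap.coe_coe, hWval, restr_coe])⟩
  have hker' : FiniteDimensional ℂ (W.ker) := by rw [hkerW]; exact hk0
  have hcok' : FiniteDimensional ℂ ((R : Submodule ℂ X) ⧸ W.range) := by
    rw [hrangeW]; exact hq0
  have hind' : Module.finrank ℂ (W.ker) =
      Module.finrank ℂ ((R : Submodule ℂ X) ⧸ W.range) := by
    rw [hkerW, hrangeW]; exact hi0
  obtain ⟨ε, hε, hstab⟩ := stabWeyl W hker' hcok' hind'
  refine ⟨ε, hε, ?_⟩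
  intro μ hμ0 hμ
  obtain ⟨hf1, hf2, hf3⟩ := hstab μ hμ
  set S : X →L[ℂ] X := T - μ • 1 with hSdef
  have hSapply : ∀ x : X, S x = T x - μ • x := fun x => by
    rw [hSdef]
    simp [ContinuousLinearMap.sub_apply, ContinuousLinearMap.smul_apply]
  set Sl : X →ₗ[ℂ] X := (S : X →ₗ[ℂ] X) with hSldef
  have hSlapply : ∀ x : X, Sl x = T x - μ • x := fun x => hSapply x
  -- the polynomial q(T)
  set qq : X →L[ℂ] X := ∑ i ∈ Finset.range n, T ^ i * (μ • (1 : X →L[ℂ] X)) ^ (n - 1 - i)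
    with hqq
  have hcommT1 : Commute T (μ • (1 : X →L[ℂ] X)) := (Commute.one_right T).smul_right μ
  have hgeom : qq * (T - μ • 1) = T ^ n - (μ • (1 : X →L[ℂ] X)) ^ n :=
    hcommT1.geom_sum₂_mul n
  have hμpow : ∀ x : X, ((μ • (1 : X →L[ℂ] X)) ^ n) x = (μ ^ n) • x := fun x => by
    rw [smul_pow, one_pow]
    simp
  have hqid : ∀ x : X, qq (S x) = (T ^ n) x - (μ ^ n) • x := fun x => by
    have h1 : (qq * (T - μ • 1)) x = (T ^ n - (μ • (1 : X →L[ℂ] X)) ^ n) x := by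
      rw [hgeom]
    have h2 : qq (S x) = (qq * (T - μ • 1)) x := by rw [hSdef]; rfl
    rw [h2, h1, ContinuousLinearMap.sub_apply, hμpow]
  have hqT : Commute qq T := by
    apply Commute.sum_left
    intro i _
    exact ((Commute.refl T).pow_left i).mul_left ((hcommT1.symm).pow_left _)
  have hqμ1 : Commute qq (μ • (1 : X →L[ℂ] X)) := by
    apply Commute.sum_left
    intro i _
    exact (hcommT1.pow_left i).mul_left ((Commute.refl _).pow_left _)
  have hqS : Commute qq S := by
    rw [hSdef]
    exact hqT.sub_right hqμ1
  have hqR : ∀ y ∈ R, qq y ∈ R := by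
    rintro y ⟨w, rfl⟩
    refine ⟨qq w, ?_⟩
    calc (T ^ n) (qq w) = (T ^ n * qq) w := rfl
      _ = (qq * T ^ n) w := by rw [(hqT.pow_right n).eq]
      _ = qq ((T ^ n) w) := rfl
  have hμn : (μ ^ n) ≠ 0 := pow_ne_zero _ hμ0
  have hmapS : ∀ x ∈ R, Sl x ∈ R := by
    intro x hx
    rw [hSlapply]
    exact R.sub_mem (memTR T n hx) (R.smul_mem _ hx)
  have hcomapS : ∀ x, Sl x ∈ R → x ∈ R := by
    intro x hx
    have hxid : (μ ^ n) • x = (T ^ n) x - qq (S x) := by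
      rw [hqid]; abel
    have hSx : S x ∈ R := hx
    have hmem : (μ ^ n) • x ∈ R := by
      rw [hxid]
      exact R.sub_mem ⟨x, rfl⟩ (hqR _ hSx)
    have hxeq : x = (μ ^ n)⁻¹ • ((μ ^ n) • x) := by
      rw [smul_smul, inv_mul_cancel₀ hμn, one_smul]
    rw [hxeq]
    exact R.smul_mem _ hmem
  have hcoverS : ∀ x : X, ∃ y ∈ R, ∃ z, x = y + Sl z := by
    intro x
    refine ⟨(μ ^ n)⁻¹ • (T ^ n) x, R.smul_mem _ ⟨x, rfl⟩, -((μ ^ n)⁻¹ • qq x), ?_⟩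
    have h1 : Sl (-((μ ^ n)⁻¹ • qq x)) = -((μ ^ n)⁻¹ • (qq (S x))) := by
      rw [map_neg, map_smul]
      congr 2
      show S (qq x) = qq (S x)
      calc S (qq x) = (S * qq) x := rfl
        _ = (qq * S) x := by rw [← hqS.eq]
        _ = qq (S x) := rfl
    rw [h1, hqid]
    rw [smul_sub]
    rw [smul_smul, inv_mul_cancel₀ hμn, one_smul]
    abel
  set φ : R →ₗ[ℂ] R := Sl.restrict hmapS with hφdef
  have hφval : ∀ x : R, ((φ x : R) : X) = T ((x : R) : X) - μ • ((x : R) : X) := fun x => by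
    rw [hφdef, LinearMap.restrict_apply]
    exact hSlapply _
  have hWμval : ∀ x : R, (((W - μ • 1) x : R) : X) = T ((x : R) : X) - μ • ((x : R) : X) :=
    fun x => by
      have h1 : (W - μ • 1) x = W x - μ • x := by
        simp [ContinuousLinearMap.sub_apply, ContinuousLinearMap.smul_apply]
      rw [h1, Submodule.coe_sub, Submodule.coe_smul, hWval]
  have hkerφ : LinearMap.ker φ = (W - μ • 1).ker := by
    ext x
    simp only [LinearMap.mem_ker]
    constructor
    · intro hx
      apply Subtype.ext
      have h1 := congrArg (fun w : R => (w : X)) hx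
      rw [hφval] at h1
      rw [ContinuousLinearMap.coe_coe, hWμval]
      exact h1
    · intro hx
      apply Subtype.ext
      have h1 := congrArg (fun w : R => (w : X)) hx
      rw [ContinuousLinearMap.coe_coe, hWμval] at h1
      rw [hφval]
      exact h1
  have hrangeφ : LinearMap.range φ = (W - μ • 1).range := by
    ext y
    simp only [LinearMap.mem_range]
    constructor
    · rintro ⟨x, rfl⟩
      exact ⟨x, Subtype.ext (by rw [ContinuousLinearMap.coe_coe, hWμval, hφval])⟩
    · rintro ⟨x, rfl⟩
      exact ⟨x, Subtype.ext (by rw [hφval, ContinuousLinearMap.coe_coe, hWμval])⟩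
  have ek := kerEquivRestrict Sl hmapS hcomapS
  have ec := cokerEquivRestrict Sl hmapS hcomapS hcoverS
  haveI finkerφ : FiniteDimensional ℂ (LinearMap.ker φ) := by rw [hkerφ]; exact hf1
  haveI finkerSl : FiniteDimensional ℂ (LinearMap.ker Sl) := ek.finiteDimensional
  haveI finkerS : FiniteDimensional ℂ (S.ker) := by
    rw [← kerCLM]; exact finkerSl
  haveI fincokφ : FiniteDimensional ℂ ((R : Submodule ℂ X) ⧸ LinearMap.range φ) := by
    rw [hrangeφ]; exact hf2
  haveI fincokSl : FiniteDimensional ℂ (X ⧸ LinearMap.range Sl) := ec.finiteDimensional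
  haveI fincokS : FiniteDimensional ℂ (X ⧸ (S.range : Submodule ℂ X)) := by
    rw [← rangeCLM]; exact fincokSl
  have hfr : Module.finrank ℂ (S.ker) =
      Module.finrank ℂ (X ⧸ (S.range : Submodule ℂ X)) := by
    calc Module.finrank ℂ (S.ker)
        = Module.finrank ℂ (LinearMap.ker Sl) := by rw [← kerCLM]
      _ = Module.finrank ℂ (LinearMap.ker φ) := ek.symm.finrank_eq
      _ = Module.finrank ℂ ((W - μ • 1).ker) := by rw [hkerφ]
      _ = Module.finrank ℂ ((R : Submodule ℂ X) ⧸ (W - μ • 1).range) := hf3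
      _ = Module.finrank ℂ ((R : Submodule ℂ X) ⧸ LinearMap.range φ) := by rw [hrangeφ]
      _ = Module.finrank ℂ (X ⧸ LinearMap.range Sl) := ec.finrank_eq
      _ = Module.finrank ℂ (X ⧸ (S.range : Submodule ℂ X)) := by rw [← rangeCLM]
  have hclosed : IsClosed ((S.range : Submodule ℂ X) : Set X) :=
    closedRangeOfFinCoker S finkerS fincokS
  refine ⟨⟨finkerS, hclosed⟩, ?_⟩
  show (Module.finrank ℂ (S.ker) : Cardinal) ≤
    Module.rank ℂ (X ⧸ (S.range : Submodule ℂ X))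
  rw [← Module.finrank_eq_rank]
  exact_mod_cast le_of_eq hfr

private lemma isUpperBWeyl_of_isBWeyl (T : X →L[ℂ] X) (h : IsBWeyl T) : IsUpperBWeyl T := by
  obtain ⟨n, h1, h2, h3, h4, h5⟩ := h
  refine ⟨n, h1, h2, h3, ?_⟩
  haveI := h4
  rw [← Module.finrank_eq_rank]
  exact_mod_cast le_of_eq h5

end Main

/-- `Φ^iso_uBw(A) = ∅` implies `σ_w(A) = σ_Bw(A)`. -/
theorem weylSpec_eq_bweylSpec_of_phiIsoUBw_empty (A : X →L[ℂ] X)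
    (h : phiIsoUBw A = ∅) : weylSpec A = bweylSpec A := by
  ext z
  simp only [weylSpec, bweylSpec, Set.mem_setOf_eq]
  constructor
  · rintro ⟨hz, hW⟩
    refine ⟨hz, fun hB => ?_⟩
    by_cases hcase : IsUpperSemiFredholm (A - z • 1) ∧ indexLE0 (A - z • 1)
    · exact hW (weyl_of_usF_bweyl _ hcase.1 hB)
    · have hasp : z ∈ aspectrum A := by
        by_contra hna
        exact hcase (usF_of_boundedBelow _ (not_not.mp hna))
      have haw : z ∈ aweylSpec A := ⟨hasp, hcase⟩
      obtain ⟨ε, hε, hpunct⟩ := punctured (A - z • 1) hB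
      have hisoz : z ∈ iso (aweylSpec A) := by
        refine ⟨haw, ?_⟩
        have hball : (aweylSpec A \ {z}) ∩ ball z ε = ∅ := by
          ext w
          simp only [Set.mem_inter_iff, Set.mem_diff, Set.mem_singleton_iff, mem_ball,
            Set.mem_empty_iff_false, iff_false, not_and, and_imp]
          intro hw1 hw2 hw3
          have hdist : ‖w - z‖ < ε := by rwa [dist_eq_norm] at hw3
          have hres := hpunct (w - z) (sub_ne_zero.mpr hw2) hdist
          have hop : A - z • 1 - (w - z) • 1 = A - w • 1 := by
            rw [sub_smul]; abel
          rw [hop] at hres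
          exact hw1.2 hres
        rw [nhdsWithin_restrict' (aweylSpec A \ {z}) (ball_mem_nhds z hε), hball,
          nhdsWithin_empty]
      have hmem : z ∈ phiIsoUBw A :=
        ⟨hisoz, fun hub => hub.2 (isUpperBWeyl_of_isBWeyl _ hB)⟩
      rw [h] at hmem
      exact hmem
  · rintro ⟨hz, hB⟩
    exact ⟨hz, fun hW => hB (isBWeyl_of_weyl _ hW.1 hW.2)⟩

end Paper
end

section
/- Let A ∈ B(X) be an operator with no eigenvalues and let f be holomorphic in a neighbourhood of σ(A) and non-constant on each connected component of σ(A). Then f(A) has no eigenvalues. -/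
open Filter Metric Set Asymptotics Topology

namespace Paper

variable {X : Type*} [NormedAddCommGroup X] [NormedSpace ℂ X] [CompleteSpace X]

/-! ### Auxiliary lemmas for Statement 19 -/

/-- A unit in `X →L[ℂ] X` has trivial kernel. -/
lemma isUnit_noKer {T : X →L[ℂ] X} (h : IsUnit T) : ∀ x : X, T x = 0 → x = 0 := by
  intro x hx
  obtain ⟨u, rfl⟩ := h
  have h1 : ((↑u⁻¹ * ↑u : X →L[ℂ] X)) x = x := by
    rw [u.inv_mul]; rfl
  rw [ContinuousLinearMap.mul_apply, hx, map_zero] at h1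
  exact h1.symm

/-- Global factorization of an analytic function at an isolated zero. -/
lemma exists_factor {U : Set ℂ} {g : ℂ → ℂ} (hg : AnalyticOnNhd ℂ g U)
    {μ : ℂ} (hμU : μ ∈ U) (hgμ : g μ = 0) (hne : ¬ ∀ᶠ z in 𝓝 μ, g z = 0) :
    ∃ (n : ℕ) (h : ℂ → ℂ), 0 < n ∧ AnalyticOnNhd ℂ h U ∧ h μ ≠ 0 ∧
      g = fun z => (z - μ) ^ n * h z := by
  classical
  have hgA : AnalyticAt ℂ g μ := hg μ hμU
  have hord : analyticOrderAt g μ ≠ ⊤ := fun h => hne (analyticOrderAt_eq_top.mp h)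
  obtain ⟨n, hn⟩ := ENat.ne_top_iff_exists.mp hord
  obtain ⟨h₀, hh₀, hh₀ne, hev⟩ := (hgA.analyticOrderAt_eq_natCast).mp hn.symm
  have hnpos : 0 < n := by
    rcases Nat.eq_zero_or_pos n with h0 | h0
    · exfalso
      subst h0
      have := hev.self_of_nhds
      simp only [pow_zero, one_smul] at this
      exact hh₀ne (this ▸ hgμ)
    · exact h0
  set h : ℂ → ℂ := Function.update (fun z => g z / (z - μ) ^ n) μ (h₀ μ) with hdef
  have hval : ∀ z, z ≠ μ → h z = g z / (z - μ) ^ n := fun z hz =>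
    Function.update_of_ne hz _ _
  have hμval : h μ = h₀ μ := Function.update_self _ _ _
  refine ⟨n, h, hnpos, ?_, by rw [hμval]; exact hh₀ne, ?_⟩
  · intro z hz
    by_cases hzμ : z = μ
    · subst hzμ
      refine hh₀.congr ?_
      filter_upwards [hev] with w hw
      by_cases hwz : w = z
      · subst hwz; rw [hμval]
      · rw [hval w hwz, hw, smul_eq_mul,
          mul_div_cancel_left₀ _ (pow_ne_zero _ (sub_ne_zero.mpr hwz))]
    · have hA : AnalyticAt ℂ (fun w => g w / (w - μ) ^ n) z :=
        (hg z hz).div (((analyticAt_id).sub analyticAt_const).pow n)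
          (pow_ne_zero _ (sub_ne_zero.mpr hzμ))
      refine hA.congr ?_
      have hop : {μ}ᶜ ∈ 𝓝 z := isOpen_compl_singleton.mem_nhds hzμ
      filter_upwards [hop] with w hw
      exact (hval w hw).symm
  · funext z
    by_cases hzμ : z = μ
    · subst hzμ
      rw [hgμ, sub_self, zero_pow hnpos.ne', zero_mul]
    · rw [hval z hzμ, mul_div_cancel₀ _ (pow_ne_zero _ (sub_ne_zero.mpr hzμ))]

/-- The functional calculus sends `z ↦ z - μ` to `A - μ • 1`. -/
lemma toFun_sub_const (A : X →L[ℂ] X) {U : Set ℂ} (Φ : HoloCalcOn A U) (μ : ℂ) :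
    Φ.toFun (fun w => w - μ) = A - μ • 1 := by
  have h1 : (fun w : ℂ => w - μ) = (id : ℂ → ℂ) + (-μ) • (fun _ => (1 : ℂ)) := by
    funext w; simp [sub_eq_add_neg]
  have hc : AnalyticOnNhd ℂ ((-μ) • (fun _ => (1 : ℂ))) U := by
    have : ((-μ) • (fun _ => (1 : ℂ))) = fun _ : ℂ => (-μ : ℂ) := by
      funext w; simp
    rw [this]; exact analyticOnNhd_const
  rw [h1, Φ.map_add id ((-μ) • fun _ => (1 : ℂ)) analyticOnNhd_id hc,
    Φ.map_smul (-μ) (fun _ => (1 : ℂ)) analyticOnNhd_const,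
    Φ.map_id, Φ.map_one, neg_smul, ← sub_eq_add_neg]

/-- The functional calculus sends `z ↦ (z - μ) ^ n` to `(A - μ • 1) ^ n`. -/
lemma toFun_pow (A : X →L[ℂ] X) {U : Set ℂ} (Φ : HoloCalcOn A U) (μ : ℂ) (n : ℕ) :
    Φ.toFun (fun w => (w - μ) ^ n) = (A - μ • 1) ^ n := by
  induction n with
  | zero => simpa using Φ.map_one
  | succ n ih =>
    have h1 : (fun w : ℂ => (w - μ) ^ (n + 1)) =
        (fun w => (w - μ) ^ n) * (fun w => w - μ) := by
      funext w; simp [pow_succ]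
    have ha : AnalyticOnNhd ℂ (fun w : ℂ => w - μ) U :=
      analyticOnNhd_id.sub analyticOnNhd_const
    rw [h1, Φ.map_mul (fun w => (w - μ) ^ n) (fun w => w - μ) (ha.pow n) ha, ih,
      toFun_sub_const, pow_succ]

/-- Powers of `A - μ • 1` are injective when `A` has no eigenvalues. -/
lemma pow_noKer (A : X →L[ℂ] X) (hA : ∀ (z : ℂ) (x : X), A x = z • x → x = 0)
    (μ : ℂ) (n : ℕ) : ∀ x : X, ((A - μ • 1) ^ n) x = 0 → x = 0 := by
  induction n with
  | zero => intro x hx; simpa using hx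
  | succ n ih =>
    intro x hx
    rw [pow_succ] at hx
    have h2 : ((A - μ • 1) ^ n) ((A - μ • 1) x) = 0 := by
      rw [← ContinuousLinearMap.mul_apply]; exact hx
    have h3 : (A - μ • 1) x = 0 := ih _ h2
    have h4 : A x = μ • x := by
      have := h3
      simp only [ContinuousLinearMap.sub_apply, ContinuousLinearMap.smul_apply,
        ContinuousLinearMap.one_apply, sub_eq_zero] at this
      exact this
    exact hA μ x h4

/-- Key induction: if `g` is analytic on `U` with finitely many zeros on the spectrum,
each of which is an isolated zero, then `Φ.toFun g` has trivial kernel. -/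
lemma key_induction (A : X →L[ℂ] X)
    (hA : ∀ (z : ℂ) (x : X), A x = z • x → x = 0)
    {U : Set ℂ} (Φ : HoloCalcOn A U) :
    ∀ (N : ℕ) (Z : Finset ℂ) (g : ℂ → ℂ), Z.card ≤ N →
      AnalyticOnNhd ℂ g U →
      (∀ z ∈ spectrum ℂ A, g z = 0 → z ∈ Z) →
      (∀ z ∈ spectrum ℂ A, g z = 0 → ¬ ∀ᶠ w in 𝓝 z, g w = 0) →
      ∀ x : X, Φ.toFun g x = 0 → x = 0 := by
  intro N
  induction N with
  | zero =>
    intro Z g hcard hg hZ _ x hx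
    have hnz : ∀ z ∈ spectrum ℂ A, g z ≠ 0 := by
      intro z hz hgz
      have := hZ z hz hgz
      simp [Finset.card_eq_zero.mp (Nat.le_zero.mp hcard)] at this
    have h0 : (0 : ℂ) ∉ spectrum ℂ (Φ.toFun g) := by
      rw [Φ.spec_map g hg]
      rintro ⟨w, hw, hw0⟩
      exact hnz w hw hw0
    have hunit : IsUnit (Φ.toFun g) := by
      have := spectrum.notMem_iff.mp h0
      simpa using this.neg
    exact isUnit_noKer hunit x hx
  | succ N ih =>
    intro Z g hcard hg hZ hiso x hx
    by_cases hzero : ∃ μ ∈ spectrum ℂ A, g μ = 0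
    · obtain ⟨μ, hμs, hgμ⟩ := hzero
      have hμU : μ ∈ U := Φ.spec_subset hμs
      obtain ⟨n, h, hnpos, hh, hhμ, hfac⟩ :=
        exists_factor hg hμU hgμ (hiso μ hμs hgμ)
      have hmul : Φ.toFun g = (A - μ • 1) ^ n * Φ.toFun h := by
        have hgeq : g = (fun w => (w - μ) ^ n) * h := by
          funext w
          rw [hfac]; rfl
        have ha : AnalyticOnNhd ℂ (fun w : ℂ => (w - μ) ^ n) U :=
          (analyticOnNhd_id.sub analyticOnNhd_const).pow n
        rw [hgeq, Φ.map_mul (fun w => (w - μ) ^ n) h ha hh, toFun_pow]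
      have hx' : ((A - μ • 1) ^ n) (Φ.toFun h x) = 0 := by
        rw [← ContinuousLinearMap.mul_apply, ← hmul]; exact hx
      have hhx : Φ.toFun h x = 0 := pow_noKer A hA μ n _ hx'
      refine ih (Z.erase μ) h ?_ hh ?_ ?_ x hhx
      · have hμZ : μ ∈ Z := hZ μ hμs hgμ
        rw [Finset.card_erase_of_mem hμZ]
        omega
      · intro z hz hhz
        have hzμ : z ≠ μ := by
          intro hc; subst hc; exact hhμ hhz
        have hgz : g z = 0 := by
          rw [hfac]; simp [hhz]
        exact Finset.mem_erase.mpr ⟨hzμ, hZ z hz hgz⟩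
      · intro z hz hhz hev
        have hzμ : z ≠ μ := by
          intro hc; subst hc; exact hhμ hhz
        have hgz : g z = 0 := by rw [hfac]; simp [hhz]
        refine hiso z hz hgz ?_
        filter_upwards [hev] with w hw
        rw [hfac]; simp [hw]
    · push_neg at hzero
      have h0 : (0 : ℂ) ∉ spectrum ℂ (Φ.toFun g) := by
        rw [Φ.spec_map g hg]
        rintro ⟨w, hw, hw0⟩
        exact hzero w hw hw0
      have hunit : IsUnit (Φ.toFun g) := by
        have := spectrum.notMem_iff.mp h0
        simpa using this.neg
      exact isUnit_noKer hunit x hx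

/-- if `A` has no eigenvalues, then neither does `f(A)`. -/
theorem no_eigenvalues_holoCalc (A : X →L[ℂ] X)
    (hA : ∀ (z : ℂ) (x : X), A x = z • x → x = 0)
    (U : Set ℂ) (Φ : HoloCalcOn A U) (f : ℂ → ℂ) (hf : AnalyticOnNhd ℂ f U)
    (hnc : NonConstOnSpecComponents A f) :
    ∀ (z : ℂ) (x : X), Φ.toFun f x = z • x → x = 0 := by
  intro z x hx
  classical
  set g : ℂ → ℂ := fun w => f w - z with hgdef
  have hg : AnalyticOnNhd ℂ g U := hf.sub analyticOnNhd_const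
  -- `Φ.toFun g = Φ.toFun f - z • 1`
  have hgf : Φ.toFun g = Φ.toFun f - z • 1 := by
    have h1 : g = f + (-z) • (fun _ => (1 : ℂ)) := by
      funext w; simp [hgdef, sub_eq_add_neg]
    have hc : AnalyticOnNhd ℂ ((-z) • (fun _ => (1 : ℂ))) U := by
      have : ((-z) • (fun _ => (1 : ℂ))) = fun _ : ℂ => (-z : ℂ) := by
        funext w; simp
      rw [this]; exact analyticOnNhd_const
    rw [h1, Φ.map_add _ _ hf hc, Φ.map_smul _ _ analyticOnNhd_const, Φ.map_one,
      neg_smul, ← sub_eq_add_neg]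
  have hgx : Φ.toFun g x = 0 := by
    rw [hgf]
    simp [ContinuousLinearMap.sub_apply, hx]
  -- each zero of `g` on the spectrum is isolated
  have hiso : ∀ w ∈ spectrum ℂ A, g w = 0 → ¬ ∀ᶠ v in 𝓝 w, g v = 0 := by
    intro w hw hgw hev
    obtain ⟨w', hw', hfw'⟩ := hnc w hw
    have hfw : f w = z := by
      have := hgw; simpa [hgdef, sub_eq_zero] using this
    have hwU : w ∈ U := Φ.spec_subset hw
    have hCsub : connectedComponentIn (spectrum ℂ A) w ⊆ connectedComponentIn U w :=
      connectedComponentIn_mono w Φ.spec_subset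
    have hgC : AnalyticOnNhd ℂ g (connectedComponentIn U w) :=
      hg.mono (connectedComponentIn_subset U w)
    have hEq : EqOn g 0 (connectedComponentIn U w) := by
      refine hgC.eqOn_zero_of_preconnected_of_eventuallyEq_zero
        isPreconnected_connectedComponentIn (mem_connectedComponentIn hwU) ?_
      exact hev
    have hgw' : g w' = 0 := hEq (hCsub hw')
    have : f w' = z := by simpa [hgdef, sub_eq_zero] using hgw'
    exact hfw' (by rw [this, hfw])
  -- the zero set of `g` on the spectrum is finite
  set S : Set ℂ := {w ∈ spectrum ℂ A | g w = 0} with hSdef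
  have hSfin : S.Finite := by
    have hnbhd : ∀ w ∈ spectrum ℂ A, {v | v = w ∨ g v ≠ 0} ∈ 𝓝 w := by
      intro w hw
      by_cases hgw : g w = 0
      · have h1 := hiso w hw hgw
        have h2 : ∀ᶠ v in 𝓝[≠] w, g v ≠ 0 := by
          rcases (hg w (Φ.spec_subset hw)).eventually_eq_zero_or_eventually_ne_zero with
            hc | hc
          · exact absurd hc h1
          · exact hc
        rw [eventually_nhdsWithin_iff] at h2
        filter_upwards [h2] with v hv
        by_cases hvw : v = w
        · exact Or.inl hvw
        · exact Or.inr (hv hvw)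
      · have hcont : ContinuousAt g w := (hg w (Φ.spec_subset hw)).continuousAt
        filter_upwards [hcont.eventually_ne hgw] with v hv
        exact Or.inr hv
    obtain ⟨t, _, hcov⟩ := (spectrum.isCompact A).elim_nhds_subcover _ hnbhd
    refine Set.Finite.subset t.finite_toSet ?_
    intro v hv
    obtain ⟨hvs, hgv⟩ := hv
    obtain ⟨w, hwt, hvw⟩ := Set.mem_iUnion₂.mp (hcov hvs)
    rcases hvw with h | h
    · subst h; exact hwt
    · exact absurd hgv h
  -- conclude via the key induction
  have hZ : ∀ w ∈ spectrum ℂ A, g w = 0 → w ∈ hSfin.toFinset := by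
    intro w hw hgw
    exact hSfin.mem_toFinset.mpr ⟨hw, hgw⟩
  exact key_induction A hA Φ hSfin.toFinset.card hSfin.toFinset g le_rfl hg hZ hiso x hgx

end Paper
end
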